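/- Let U be a utility function with lim_{x→∞} U(x) > 0, lim_{x→0+} U(x) < 0, and asymptotic elasticity AE(U) := limsup_{x→∞} x U′(x) / U(x) < 1. Then there exist constants L > 0 and α > 0 such that the convex conjugate V satisfies V(y) ≤ L y^{-α} for all y ∈ (0, ∞). -/

import Mathlib

open MeasureTheory Filter Set Topology

lemma young_aux {C γ x y : ℝ} (hC : 0 < C) (hγ0 : 0 < γ) (hγ1 : γ < 1)
    (hx : 0 < x) (hy : 0 < y) :
    C * x ^ γ - x * y ≤ (C * (1 - γ) * (C * γ) ^ (γ / (1 - γ))) * y ^ (-(γ / (1 - γ))) := by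
  have h1γ : 0 < 1 - γ := by linarith
  have hCγ : 0 < C * γ := mul_pos hC hγ0
  set α : ℝ := γ / (1 - γ) with hα_def
  set a : ℝ := (y / (C * γ)) ^ (1 - γ)⁻¹ with ha_def
  have ha : 0 < a := Real.rpow_pos_of_pos (div_pos hy hCγ) _
  have key : (a * x) ^ γ * 1 ^ (1 - γ) ≤ γ * (a * x) + (1 - γ) * 1 :=
    Real.geom_mean_le_arith_mean2_weighted hγ0.le h1γ.le (mul_pos ha hx).le zero_le_one
      (by ring)
  rw [Real.one_rpow, mul_one, mul_one] at key
  rw [Real.mul_rpow ha.le hx.le] at key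
  have ha1 : a ^ (1 - γ) = y / (C * γ) :=
    Real.rpow_inv_rpow (div_pos hy hCγ).le h1γ.ne'
  have hinv : a ^ (-γ) * a ^ γ = 1 := by
    rw [← Real.rpow_add ha]; simp
  have haa : a ^ (-γ) * a = a ^ (1 - γ) := by
    nth_rewrite 2 [← Real.rpow_one a]
    rw [← Real.rpow_add ha]; ring_nf
  have haneg : a ^ (-γ) = (C * γ) ^ α * y ^ (-α) := by
    have h1 : (a ^ (1 - γ)) ^ (-α) = a ^ (-γ) := by
      rw [← Real.rpow_mul ha.le]
      congr 1
      rw [hα_def]; field_simp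
    rw [← h1, ha1, Real.rpow_neg (div_pos hy hCγ).le, Real.div_rpow hy.le hCγ.le,
      Real.rpow_neg hy.le]
    field_simp
  -- main chain
  have hposa : 0 < a ^ (-γ) := Real.rpow_pos_of_pos ha _
  have hkey2 : C * (a ^ (-γ)) * (a ^ γ * x ^ γ) ≤ C * (a ^ (-γ)) * (γ * (a * x) + (1 - γ)) :=
    mul_le_mul_of_nonneg_left key (by positivity)
  have hxγ : C * (a ^ (-γ)) * (a ^ γ * x ^ γ) = C * x ^ γ := by
    rw [show C * (a ^ (-γ)) * (a ^ γ * x ^ γ) = C * (a ^ (-γ) * a ^ γ) * x ^ γ by ring, hinv]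
    ring
  have hrhs : C * (a ^ (-γ)) * (γ * (a * x) + (1 - γ))
      = (C * γ * (a ^ (1 - γ))) * x + C * (1 - γ) * a ^ (-γ) := by
    rw [← haa]; ring
  have hcoef : C * γ * (a ^ (1 - γ)) = y := by
    rw [ha1]; field_simp
  have hfin : C * x ^ γ ≤ y * x + C * (1 - γ) * a ^ (-γ) := by
    rw [← hcoef]; rw [hxγ, hrhs] at hkey2; linarith
  rw [haneg] at hfin
  nlinarith [Real.rpow_pos_of_pos hy (-α)]

lemma gron_aux {U : ℝ → ℝ} {γ x₀ : ℝ} (hx₀ : 0 < x₀) (hγ0 : 0 < γ)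
    (hd : ∀ x ∈ Set.Ici x₀, DifferentiableAt ℝ U x)
    (hder : ∀ x ∈ Set.Ici x₀, x * deriv U x ≤ γ * U x) :
    ∀ x ∈ Set.Ici x₀, U x ≤ (U x₀ / x₀ ^ γ) * x ^ γ := by
  set g : ℝ → ℝ := fun x => U x * x ^ (-γ) with hg_def
  have hgd : ∀ x ∈ Set.Ici x₀, HasDerivAt g
      (deriv U x * x ^ (-γ) + U x * (-γ * x ^ (-γ - 1))) x := by
    intro x hx
    have hxpos : 0 < x := lt_of_lt_of_le hx₀ hx
    exact ((hd x hx).hasDerivAt).mul (Real.hasDerivAt_rpow_const (Or.inl hxpos.ne'))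
  have hcont : ContinuousOn g (Set.Ici x₀) := fun x hx =>
    ((hgd x hx).continuousAt).continuousWithinAt
  have hint : interior (Set.Ici x₀) = Set.Ioi x₀ := interior_Ici
  have hdiff : DifferentiableOn ℝ g (interior (Set.Ici x₀)) := by
    rw [hint]; intro x hx
    exact ((hgd x (Set.Ioi_subset_Ici_self hx)).differentiableAt).differentiableWithinAt
  have hnonpos : ∀ x ∈ interior (Set.Ici x₀), deriv g x ≤ 0 := by
    rw [hint]; intro x hx
    have hxpos : 0 < x := lt_trans hx₀ hx
    rw [(hgd x (Set.Ioi_subset_Ici_self hx)).deriv]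
    have hfac : x ^ (-γ) = x * x ^ (-γ - 1) := by
      have h := Real.rpow_add hxpos 1 (-γ - 1)
      rw [Real.rpow_one] at h
      rw [show (-γ) = 1 + (-γ - 1) by ring, h]; ring_nf
    have h1 : 0 < x ^ (-γ - 1) := Real.rpow_pos_of_pos hxpos _
    have h2 := hder x (Set.Ioi_subset_Ici_self hx)
    rw [hfac]
    nlinarith
  have hanti : AntitoneOn g (Set.Ici x₀) :=
    antitoneOn_of_deriv_nonpos (convex_Ici x₀) hcont hdiff hnonpos
  intro x hx
  have hxpos : 0 < x := lt_of_lt_of_le hx₀ hx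
  have := hanti (Set.self_mem_Ici) hx hx
  have hgx : U x * x ^ (-γ) ≤ U x₀ * x₀ ^ (-γ) := this
  have hxγ : 0 < x ^ γ := Real.rpow_pos_of_pos hxpos _
  have hx0γ : 0 < x₀ ^ γ := Real.rpow_pos_of_pos hx₀ _
  have hmul := mul_le_mul_of_nonneg_right hgx hxγ.le
  have e1 : U x * x ^ (-γ) * x ^ γ = U x := by
    rw [mul_assoc, ← Real.rpow_add hxpos]; simp
  have e2 : x₀ ^ (-γ) = (x₀ ^ γ)⁻¹ := by
    rw [Real.rpow_neg hx₀.le]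
  rw [e1, e2] at hmul
  calc U x ≤ U x₀ * (x₀ ^ γ)⁻¹ * x ^ γ := hmul
    _ = (U x₀ / x₀ ^ γ) * x ^ γ := by ring

/-- The convex conjugate `V(y) = sup_{x > 0} (U(x) − x y)` of a utility function `U`. -/
noncomputable def legendreConj (U : ℝ → ℝ) (y : ℝ) : ℝ :=
  sSup ((fun x => U x - x * y) '' Set.Ioi (0 : ℝ))

/-- If `U` is a utility function with `lim_{x→∞} U(x) > 0`, `lim_{x→0+} U(x) < 0` and
asymptotic elasticity `AE(U) = limsup_{x→∞} x U'(x)/U(x) < 1`, then there exist `L > 0` and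
`α > 0` such that the convex conjugate satisfies `V(y) ≤ L y^{-α}` for all `y > 0`. -/
theorem stmt9 (U : ℝ → ℝ)
    (hmono : StrictMonoOn U (Set.Ioi 0))
    (hconc : StrictConcaveOn ℝ (Set.Ioi 0) U)
    (hsmooth : ContDiffOn ℝ 2 U (Set.Ioi 0))
    (hInada0 : Tendsto (deriv U) (nhdsWithin 0 (Set.Ioi 0)) atTop)
    (hInadaTop : Tendsto (deriv U) atTop (𝓝 0))
    (hUtop : ∃ l : EReal, Tendsto (fun x => (U x : EReal)) atTop (𝓝 l) ∧ 0 < l)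
    (hU0 : ∃ l : EReal, Tendsto (fun x => (U x : EReal)) (nhdsWithin 0 (Set.Ioi 0)) (𝓝 l) ∧ l < 0)
    (hAE : Filter.limsup (fun x => x * deriv U x / U x) atTop < 1) :
    ∃ L > (0 : ℝ), ∃ α > (0 : ℝ), ∀ y > (0 : ℝ), legendreConj U y ≤ L * y ^ (-α) := by
  -- differentiability on Ioi 0
  have hdiff : ∀ x ∈ Set.Ioi (0:ℝ), DifferentiableAt ℝ U x := by
    intro x hx
    exact (hsmooth.contDiffAt (isOpen_Ioi.mem_nhds hx)).differentiableAt (by norm_num)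
  -- eventual positivity of U at infinity
  obtain ⟨l, hl, hlpos⟩ := hUtop
  have hev_pos : ∀ᶠ x in atTop, 0 < U x := by
    filter_upwards [hl (isOpen_Ioi.mem_nhds hlpos)] with x hx
    exact EReal.coe_pos.mp hx
  -- boundedness of the elasticity
  obtain ⟨x₁, hx₁⟩ := eventually_atTop.1 (hev_pos.and (eventually_ge_atTop (1:ℝ)))
  have hbound : ∀ᶠ x in atTop, x * deriv U x / U x ≤ 2 := by
    filter_upwards [eventually_ge_atTop (2 * max x₁ 1)] with x hx
    have hm1 : (1:ℝ) ≤ max x₁ 1 := le_max_right _ _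
    have hxm : x₁ ≤ max x₁ 1 := le_max_left _ _
    have hhalf : x₁ ≤ x / 2 := by linarith
    have hhalfpos : (0:ℝ) < x / 2 := by linarith
    have hxpos : (0:ℝ) < x := by linarith
    have hU2 : 0 < U (x / 2) := (hx₁ _ hhalf).1
    have hUx : 0 < U x := (hx₁ _ (by linarith)).1
    have hs := hconc.deriv_lt_slope (mem_Ioi.2 hhalfpos) (mem_Ioi.2 hxpos)
      (by linarith) (hdiff x (mem_Ioi.2 hxpos))
    rw [slope_def_field] at hs
    have hs' : deriv U x * (x - x / 2) < U x - U (x / 2) :=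
      (lt_div_iff₀ (by linarith)).1 hs
    rw [div_le_iff₀ hUx]
    nlinarith
  have hIsBdd : IsBoundedUnder (· ≤ ·) atTop (fun x => x * deriv U x / U x) :=
    ⟨2, by simpa using hbound⟩
  -- choose γ
  set c := Filter.limsup (fun x => x * deriv U x / U x) atTop with hc_def
  set γ : ℝ := max (1/2) ((c+1)/2) with hγ_def
  have hγ0 : (0:ℝ) < γ := lt_of_lt_of_le (by norm_num) (le_max_left _ _)
  have hγ1 : γ < 1 := max_lt (by norm_num) (by linarith)
  have hcγ : c < γ := lt_of_lt_of_le (by linarith) (le_max_right _ _)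
  have hev2 : ∀ᶠ x in atTop, x * deriv U x / U x < γ :=
    eventually_lt_of_limsup_lt hcγ hIsBdd
  -- choose x₀
  obtain ⟨x₀, hx₀props⟩ := eventually_atTop.1 (hev2.and hev_pos)
  set x₂ : ℝ := max x₀ 1 with hx₂_def
  have hx₂pos : (0:ℝ) < x₂ := lt_of_lt_of_le one_pos (le_max_right _ _)
  have hprops : ∀ x, x₂ ≤ x → x * deriv U x / U x < γ ∧ 0 < U x :=
    fun x hx => hx₀props x (le_trans (le_max_left _ _) hx)
  have hder : ∀ x ∈ Set.Ici x₂, x * deriv U x ≤ γ * U x := by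
    intro x hx
    obtain ⟨h1, h2⟩ := hprops x hx
    have := (div_lt_iff₀ h2).1 h1
    linarith
  have hdIci : ∀ x ∈ Set.Ici x₂, DifferentiableAt ℝ U x :=
    fun x hx => hdiff x (mem_Ioi.2 (lt_of_lt_of_le hx₂pos hx))
  have hpow := gron_aux hx₂pos hγ0 hdIci hder
  have hUx₂ : 0 < U x₂ := (hprops x₂ le_rfl).2
  set C : ℝ := U x₂ / x₂ ^ γ with hC_def
  have hC : 0 < C := div_pos hUx₂ (Real.rpow_pos_of_pos hx₂pos _)
  -- choose δ
  obtain ⟨l0, hl0, hl0neg⟩ := hU0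
  have hevneg : ∀ᶠ x in nhdsWithin 0 (Set.Ioi 0), U x < 0 := by
    filter_upwards [hl0 (isOpen_Iio.mem_nhds hl0neg)] with x hx
    exact EReal.coe_neg'.mp hx
  have hevlt : ∀ᶠ x in nhdsWithin 0 (Set.Ioi 0), x < x₂ :=
    Filter.Eventually.filter_mono nhdsWithin_le_nhds
      (Filter.Tendsto.eventually_lt_const hx₂pos tendsto_id)
  obtain ⟨δ, hδU, hδx₂, hδpos⟩ :=
    (hevneg.and (hevlt.and self_mem_nhdsWithin)).exists
  have hδpos' : (0:ℝ) < δ := hδpos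
  -- constants
  set αe : ℝ := γ / (1 - γ) with hαe_def
  have hαpos : 0 < αe := div_pos hγ0 (by linarith)
  set L₁ : ℝ := C * (1 - γ) * (C * γ) ^ αe with hL₁_def
  have hL₁ : 0 < L₁ := by
    have h := Real.rpow_pos_of_pos (mul_pos hC hγ0) αe
    have h1γ : (0:ℝ) < 1 - γ := by linarith
    exact mul_pos (mul_pos hC h1γ) h
  set y₁ : ℝ := U x₂ / δ with hy₁_def
  have hy₁ : 0 < y₁ := div_pos hUx₂ hδpos'
  set L₂ : ℝ := U x₂ * y₁ ^ αe with hL₂_def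
  have hL₂ : 0 < L₂ := mul_pos hUx₂ (Real.rpow_pos_of_pos hy₁ _)
  refine ⟨L₁ + L₂, by linarith, αe, hαpos, ?_⟩
  intro y hy
  have hyα : 0 < y ^ (-αe) := Real.rpow_pos_of_pos hy _
  apply Real.sSup_le _ (by positivity)
  rintro v ⟨x, hx, rfl⟩
  show U x - x * y ≤ (L₁ + L₂) * y ^ (-αe)
  have hsum : L₁ * y ^ (-αe) + L₂ * y ^ (-αe) = (L₁ + L₂) * y ^ (-αe) := by ring
  have hxpos : (0:ℝ) < x := hx
  have hL₁y : 0 ≤ L₁ * y ^ (-αe) := by positivity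
  have hL₂y : 0 ≤ L₂ * y ^ (-αe) := by positivity
  rcases le_total x δ with hcase | hcase
  · -- 0 < x ≤ δ : U x ≤ U δ < 0, x*y > 0
    have hUxle : U x ≤ U δ :=
      hmono.monotoneOn (mem_Ioi.2 hxpos) (mem_Ioi.2 hδpos') hcase
    have hxy : 0 < x * y := mul_pos hxpos hy
    linarith
  · rcases le_total x x₂ with hcase2 | hcase2
    · -- δ ≤ x ≤ x₂
      have hUxle : U x ≤ U x₂ :=
        hmono.monotoneOn (mem_Ioi.2 hxpos) (mem_Ioi.2 hx₂pos) hcase2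
      have hxy : δ * y ≤ x * y := mul_le_mul_of_nonneg_right hcase hy.le
      have hδy : 0 < δ * y := mul_pos hδpos' hy
      rcases le_total (U x₂) (δ * y) with h3 | h3
      · linarith
      · have hyle : y ≤ y₁ := (le_div_iff₀ hδpos').2 (by linarith)
        have hmpow : y₁ ^ (-αe) ≤ y ^ (-αe) :=
          Real.rpow_le_rpow_of_nonpos hy hyle (neg_nonpos.2 hαpos.le)
        have hcancel : y₁ ^ αe * y₁ ^ (-αe) = 1 := by
          rw [← Real.rpow_add hy₁]; simp
        have hUeq : U x₂ = L₂ * y₁ ^ (-αe) := by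
          rw [hL₂_def, mul_assoc, hcancel, mul_one]
        have h5 : L₂ * y₁ ^ (-αe) ≤ L₂ * y ^ (-αe) :=
          mul_le_mul_of_nonneg_left hmpow hL₂.le
        linarith
    · -- x₂ ≤ x
      have h1 := hpow x hcase2
      have h2 := young_aux hC hγ0 hγ1 hxpos hy
      rw [← hαe_def] at h2
      rw [← hL₁_def] at h2
      linarith
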